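/- arXiv:math/0309314 — 3 statements merged into one kernel-verified Lean document; each statement's English description precedes it below -/
import Mathlib

section
/- Let g be a real semisimple Lie algebra with Cartan involution θ, Cartan decomposition g = k ⊕ m, and let B_θ(X,Y) = −B(X, θY) denote the associated positive definite inner product (B the Killing form). If Y = Ad(g)Y′ for some g in the adjoint group G and some Y′ ∈ k, then B_θ(Y′, Y′) ≤ B_θ(Y, Y). -/
/-- The Killing form `B(X,Y) = tr(ad X ∘ ad Y)` of a (finite-dimensional real) Lie
algebra whose bracket is given by the bilinear map `br`. -/
noncomputable def killingB {L : Type*} [NormedAddCommGroup L] [NormedSpace ℝ L]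
    [FiniteDimensional ℝ L] (br : L →ₗ[ℝ] L →ₗ[ℝ] L) (X Y : L) : ℝ :=
  LinearMap.trace ℝ L ((br X) ∘ₗ (br Y))

/-- The positive definite form `B_θ(X,Y) = −B(X, θY)` associated to a Cartan
involution `θ`. -/
noncomputable def Btheta {L : Type*} [NormedAddCommGroup L] [NormedSpace ℝ L]
    [FiniteDimensional ℝ L] (br : L →ₗ[ℝ] L →ₗ[ℝ] L) (θ : L →ₗ[ℝ] L) (X Y : L) : ℝ :=
  -(killingB br X (θ Y))

/-- The elements `exp(ad X)`, `X ∈ g`, generating the connected adjoint group of `g`. -/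
noncomputable def expAdSet {L : Type*} [NormedAddCommGroup L] [NormedSpace ℝ L]
    [FiniteDimensional ℝ L] (br : L →ₗ[ℝ] L →ₗ[ℝ] L) : Set (L →ₗ[ℝ] L) :=
  {f | ∃ X : L, f =
    ((NormedSpace.exp (LinearMap.toContinuousLinearMap (br X)) : L →L[ℝ] L) : L →ₗ[ℝ] L)}

section Aux

variable {L : Type*} [NormedAddCommGroup L] [NormedSpace ℝ L] [FiniteDimensional ℝ L]

/-- The Killing form packaged as a bilinear map. -/
noncomputable def KBmap (br : L →ₗ[ℝ] L →ₗ[ℝ] L) : L →ₗ[ℝ] L →ₗ[ℝ] ℝ :=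
  LinearMap.mk₂ ℝ (killingB br)
    (fun m₁ m₂ n => by simp [killingB, map_add, LinearMap.add_comp])
    (fun c m n => by simp [killingB, map_smul, LinearMap.smul_comp])
    (fun m n₁ n₂ => by simp [killingB, map_add, LinearMap.comp_add])
    (fun c m n => by simp [killingB, map_smul, LinearMap.comp_smul])

@[simp] lemma KBmap_apply (br : L →ₗ[ℝ] L →ₗ[ℝ] L) (x y : L) :
    KBmap br x y = killingB br x y := rfl

lemma killingB_symm (br : L →ₗ[ℝ] L →ₗ[ℝ] L) (x y : L) :
    killingB br x y = killingB br y x :=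
  LinearMap.trace_comp_comm' _ _

lemma expApply (A : L →L[ℝ] L) (u : L) :
    HasSum (fun n : ℕ => ((n.factorial : ℝ))⁻¹ • (A ^ n) u) (NormedSpace.exp A u) := by
  simpa using
    (NormedSpace.exp_series_hasSum_exp' (𝕂 := ℝ) A).mapL (ContinuousLinearMap.apply ℝ L u)

/-- If `A'` is adjoint to `A` w.r.t. the bilinear form `Φ`, then `exp A'` is adjoint
to `exp A`. -/
lemma exp_adjoint (Φ : L →ₗ[ℝ] L →ₗ[ℝ] ℝ) (A A' : L →ₗ[ℝ] L)
    (hadj : ∀ u w, Φ (A u) w = Φ u (A' w)) (u w : L) :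
    Φ (NormedSpace.exp (LinearMap.toContinuousLinearMap A) u) w
      = Φ u (NormedSpace.exp (LinearMap.toContinuousLinearMap A') w) := by
  set Ac := LinearMap.toContinuousLinearMap A
  set A'c := LinearMap.toContinuousLinearMap A'
  have hpow : ∀ (n : ℕ) (u w : L), Φ ((Ac ^ n) u) w = Φ u ((A'c ^ n) w) := by
    intro n
    induction n with
    | zero => intro u w; simp
    | succ n ih =>
      intro u w
      rw [pow_succ Ac, pow_succ' A'c]
      rw [ContinuousLinearMap.mul_apply, ContinuousLinearMap.mul_apply]
      have h1 : Φ ((Ac ^ n) (Ac u)) w = Φ (Ac u) ((A'c ^ n) w) := ih _ _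
      rw [h1]
      have h2 : Φ (Ac u) ((A'c ^ n) w) = Φ u (A'c ((A'c ^ n) w)) := by
        have : Ac u = A u := by simp [Ac]
        have h3 : A'c ((A'c ^ n) w) = A' ((A'c ^ n) w) := by simp [A'c]
        rw [this, h3]; exact hadj _ _
      exact h2
  have φ1 : L →L[ℝ] ℝ := LinearMap.toContinuousLinearMap (Φ.flip w)
  have hs1 : HasSum (fun n : ℕ => ((n.factorial : ℝ))⁻¹ • Φ ((Ac ^ n) u) w)
      (Φ (NormedSpace.exp Ac u) w) := by
    have := (expApply Ac u).mapL (LinearMap.toContinuousLinearMap (Φ.flip w))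
    simpa [map_smul] using this
  have hs2 : HasSum (fun n : ℕ => ((n.factorial : ℝ))⁻¹ • Φ u ((A'c ^ n) w))
      (Φ u (NormedSpace.exp A'c w)) := by
    have := (expApply A'c w).mapL (LinearMap.toContinuousLinearMap (Φ u))
    simpa [map_smul] using this
  refine hs1.unique ?_
  convert hs2 using 2 with n
  rw [hpow]

end Aux

/-- Let `g` be a real semisimple Lie algebra (bracket `br`, Killing form `B`) with
Cartan involution `θ` and associated positive definite form `B_θ(X,Y) = −B(X,θY)`.
If `Y = Ad(g)Y′` for some `g` in the connected adjoint group (generated by the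
`exp(ad X)`) and some `Y′` in `k = g^θ`, then `B_θ(Y′,Y′) ≤ B_θ(Y,Y)`. -/
theorem btheta_le_of_adjoint_orbit {L : Type*} [NormedAddCommGroup L] [NormedSpace ℝ L]
    [FiniteDimensional ℝ L]
    (br : L →ₗ[ℝ] L →ₗ[ℝ] L)
    (hskew : ∀ X Y : L, br X Y = -br Y X)
    (hjac : ∀ X Y Z : L, br X (br Y Z) = br (br X Y) Z + br Y (br X Z))
    (θ : L →ₗ[ℝ] L) (hθ2 : ∀ X, θ (θ X) = X)
    (hθbr : ∀ X Y, θ (br X Y) = br (θ X) (θ Y))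
    (hpos : ∀ X : L, X ≠ 0 → 0 < Btheta br θ X X)
    (g : L →ₗ[ℝ] L) (hg : g ∈ Submonoid.closure (expAdSet br))
    (Y' : L) (hY' : θ Y' = Y') :
    Btheta br θ Y' Y' ≤ Btheta br θ (g Y') (g Y') := by
  -- invariance of the Killing form
  have hinv : ∀ X u w : L, killingB br (br X u) w = -killingB br u (br X w) := by
    intro X u w
    have h1 : br (br X u) = br X ∘ₗ br u - br u ∘ₗ br X := by
      ext z
      have := hjac X u z
      simp only [LinearMap.sub_apply, LinearMap.comp_apply]
      rw [this]; abel
    have h2 : br (br X w) = br X ∘ₗ br w - br w ∘ₗ br X := by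
      ext z
      have := hjac X w z
      simp only [LinearMap.sub_apply, LinearMap.comp_apply]
      rw [this]; abel
    have key : LinearMap.trace ℝ L ((br X ∘ₗ br u) ∘ₗ br w)
        = LinearMap.trace ℝ L (br u ∘ₗ (br w ∘ₗ br X)) := by
      rw [LinearMap.comp_assoc, LinearMap.trace_comp_comm', LinearMap.comp_assoc]
    have key2 : LinearMap.trace ℝ L ((br u ∘ₗ br X) ∘ₗ br w)
        = LinearMap.trace ℝ L (br u ∘ₗ (br X ∘ₗ br w)) := by
      rw [LinearMap.comp_assoc]
    simp only [killingB, h1, h2, LinearMap.sub_comp, LinearMap.comp_sub, map_sub]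
    linarith
  -- θ-conjugation invariance of the Killing form
  have hθθ : ∀ z : L, θ (θ z) = z := hθ2
  have hbθ : ∀ X : L, br (θ X) = θ ∘ₗ br X ∘ₗ θ := by
    intro X
    ext z
    have := hθbr X (θ z)
    simp only [LinearMap.comp_apply]
    rw [this, hθ2]
  have hconj : ∀ x y : L, killingB br (θ x) (θ y) = killingB br x y := by
    intro x y
    have hop : br (θ x) ∘ₗ br (θ y) = θ ∘ₗ ((br x ∘ₗ br y) ∘ₗ θ) := by
      rw [hbθ, hbθ]
      ext z
      simp [hθ2]
    rw [killingB, hop, LinearMap.trace_comp_comm']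
    have : ((br x ∘ₗ br y) ∘ₗ θ) ∘ₗ θ = br x ∘ₗ br y := by
      ext z; simp [hθ2]
    rw [this]; rfl
  have hθswap : ∀ x y : L, killingB br (θ x) y = killingB br x (θ y) := by
    intro x y
    calc killingB br (θ x) y = killingB br (θ x) (θ (θ y)) := by rw [hθ2]
    _ = killingB br x (θ y) := hconj _ _
  -- existence of a Killing-form adjoint with the required properties
  have S : ∃ h : L →ₗ[ℝ] L,
      (∀ u w, killingB br (g u) w = killingB br u (h w)) ∧
      (∀ u w, killingB br (h u) w = killingB br u (g w)) ∧
      (∀ u, h (g u) = u) := by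
    induction hg using Submonoid.closure_induction with
    | mem f hf =>
      obtain ⟨X, rfl⟩ := hf
      refine ⟨((NormedSpace.exp (LinearMap.toContinuousLinearMap (br (-X)))
          : L →L[ℝ] L) : L →ₗ[ℝ] L), ?_, ?_, ?_⟩
      · intro u w
        have hadj : ∀ u w, KBmap br ((br X) u) w = KBmap br u ((br (-X)) w) := by
          intro u w
          show killingB br ((br X) u) w = killingB br u ((br (-X)) w)
          have e : killingB br u ((br (-X)) w) = -killingB br u (br X w) := by
            rw [map_neg br]
            simp [killingB, LinearMap.comp_neg]
          rw [e, hinv X u w]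
        exact exp_adjoint (KBmap br) (br X) (br (-X)) hadj u w
      · intro u w
        have hadj : ∀ u w, KBmap br ((br (-X)) u) w = KBmap br u ((br X) w) := by
          intro u w
          show killingB br ((br (-X)) u) w = killingB br u ((br X) w)
          have e : killingB br ((br (-X)) u) w = -killingB br (br X u) w := by
            rw [map_neg br]
            simp [killingB, LinearMap.neg_comp]
          rw [e, hinv X u w, neg_neg]
        exact exp_adjoint (KBmap br) (br (-X)) (br X) hadj u w
      · intro u
        have hc : Commute (LinearMap.toContinuousLinearMap (br (-X)))
            (LinearMap.toContinuousLinearMap (br X)) := by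
          have : LinearMap.toContinuousLinearMap (br (-X))
              = -(LinearMap.toContinuousLinearMap (br X)) := by
            ext z; simp
          rw [this]
          exact (Commute.refl _).neg_left
        have hmul : NormedSpace.exp (LinearMap.toContinuousLinearMap (br (-X)))
            * NormedSpace.exp (LinearMap.toContinuousLinearMap (br X)) = 1 := by
          letI : NormedAlgebra ℚ (L →L[ℝ] L) := NormedAlgebra.restrictScalars ℚ ℝ _
          rw [← NormedSpace.exp_add_of_commute hc]
          have : LinearMap.toContinuousLinearMap (br (-X))
              + LinearMap.toContinuousLinearMap (br X) = 0 := by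
            ext z; simp
          rw [this, NormedSpace.exp_zero]
        have := DFunLike.congr_fun hmul u
        simpa using this
    | one => exact ⟨1, by intro u w; rfl, by intro u w; rfl, by intro u; rfl⟩
    | mul x y hx hy ihx ihy =>
      obtain ⟨hx', c1, c2, c3⟩ := ihx
      obtain ⟨hy', d1, d2, d3⟩ := ihy
      refine ⟨hy' * hx', ?_, ?_, ?_⟩
      · intro u w
        rw [Module.End.mul_apply, Module.End.mul_apply, c1, d1]
      · intro u w
        rw [Module.End.mul_apply, Module.End.mul_apply, d2, c2]
      · intro u
        rw [Module.End.mul_apply, Module.End.mul_apply, c3, d3]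
  obtain ⟨h, c1, c2, c3⟩ := S
  set z := g Y' with hz
  -- B_θ(Y',Y') = B_θ(z, θ z)
  have e1 : Btheta br θ Y' Y' = Btheta br θ z (θ z) := by
    have : killingB br Y' Y' = killingB br z z := by
      calc killingB br Y' Y' = killingB br (h (g Y')) Y' := by rw [c3]
      _ = killingB br (g Y') (g Y') := c2 _ _
      _ = killingB br z z := rfl
    calc Btheta br θ Y' Y' = -(killingB br Y' Y') := by rw [Btheta, hY']
    _ = -(killingB br z z) := by rw [this]
    _ = Btheta br θ z (θ z) := by rw [Btheta, hθ2]
  -- symmetry and θ-invariance of B_θ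
  have bsymm : ∀ x y : L, Btheta br θ x y = Btheta br θ y x := by
    intro x y
    unfold Btheta
    rw [killingB_symm, hθswap]
  have bθ : Btheta br θ (θ z) (θ z) = Btheta br θ z z := by
    unfold Btheta
    rw [hθ2, ← hθswap, killingB_symm]
  -- nonnegativity
  have bnn : ∀ x : L, 0 ≤ Btheta br θ x x := by
    intro x
    by_cases hx : x = 0
    · simp [hx, Btheta, killingB]
    · exact (hpos x hx).le
  -- expansion of B_θ(z - θz, z - θz)
  have hKsub : ∀ a b c : L, killingB br (a - b) c = killingB br a c - killingB br b c := by
    intro a b c; simp [killingB, map_sub, LinearMap.sub_comp]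
  have hKsub' : ∀ a b c : L, killingB br a (b - c) = killingB br a b - killingB br a c := by
    intro a b c; simp [killingB, map_sub, LinearMap.comp_sub]
  have expand : Btheta br θ (z - θ z) (z - θ z)
      = Btheta br θ z z - Btheta br θ z (θ z) - Btheta br θ (θ z) z
        + Btheta br θ (θ z) (θ z) := by
    unfold Btheta
    rw [map_sub, hKsub, hKsub', hKsub']
    ring
  have h0 := bnn (z - θ z)
  rw [expand, bθ, bsymm (θ z) z] at h0
  have : Btheta br θ z (θ z) ≤ Btheta br θ z z := by linarith
  rw [e1]
  exact this
end

section
/- Let g be a real semisimple Lie algebra with Cartan decomposition g = k ⊕ m, Z ∈ m, and Y′ ∈ k. Write Y′ = Σ_λ Y_λ where Y_λ are eigenvectors of ad(Z) with real eigenvalues λ. Then θ(Y_λ) = Y_{−λ} for each λ, and B_θ(Ad(exp Z)Y′, Ad(exp Z)Y′) = Σ_λ e^{2λ} B_θ(Y_λ, Y_λ) ≥ B_θ(Y′, Y′). -/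
section Helpers

variable {L : Type*} [NormedAddCommGroup L] [NormedSpace ℝ L] [FiniteDimensional ℝ L]

/-- Killing form as a bilinear map. -/
noncomputable def kBil (br : L →ₗ[ℝ] L →ₗ[ℝ] L) : L →ₗ[ℝ] L →ₗ[ℝ] ℝ :=
  LinearMap.mk₂ ℝ (fun X Y => LinearMap.trace ℝ L ((br X) ∘ₗ (br Y)))
    (by intros; simp [map_add, LinearMap.add_comp])
    (by intros; simp [map_smul, LinearMap.smul_comp])
    (by intros; simp [map_add, LinearMap.comp_add])
    (by intros; simp [map_smul, LinearMap.comp_smul])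

/-- `B_θ` as a bilinear map. -/
noncomputable def BForm (br : L →ₗ[ℝ] L →ₗ[ℝ] L) (θ : L →ₗ[ℝ] L) : L →ₗ[ℝ] L →ₗ[ℝ] ℝ :=
  -((kBil br).compl₂ θ)

variable (br : L →ₗ[ℝ] L →ₗ[ℝ] L) (θ : L →ₗ[ℝ] L)

lemma Btheta_eq (X Y : L) : Btheta br θ X Y = BForm br θ X Y := rfl

lemma Btheta_sum_left {ι : Type*} (t : Finset ι) (x : ι → L) (y : L) :
    Btheta br θ (∑ i ∈ t, x i) y = ∑ i ∈ t, Btheta br θ (x i) y := by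
  simp only [Btheta_eq, map_sum, LinearMap.coe_sum, Finset.sum_apply]

lemma Btheta_sum_right {ι : Type*} (t : Finset ι) (x : L) (y : ι → L) :
    Btheta br θ x (∑ i ∈ t, y i) = ∑ i ∈ t, Btheta br θ x (y i) := by
  simp only [Btheta_eq, map_sum]

lemma Btheta_smul_left (c : ℝ) (x y : L) :
    Btheta br θ (c • x) y = c * Btheta br θ x y := by
  simp only [Btheta_eq, map_smul, LinearMap.smul_apply, smul_eq_mul]

lemma Btheta_smul_right (c : ℝ) (x y : L) :
    Btheta br θ x (c • y) = c * Btheta br θ x y := by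
  simp only [Btheta_eq, map_smul, smul_eq_mul]

lemma Btheta_zero_left (y : L) : Btheta br θ 0 y = 0 := by
  simp only [Btheta_eq, map_zero, LinearMap.zero_apply]

/-- `ad (θ X) = θ ∘ ad X ∘ θ`. -/
lemma ad_theta (hθ2 : ∀ X : L, θ (θ X) = X) (hθbr : ∀ X Y, θ (br X Y) = br (θ X) (θ Y))
    (X : L) : br (θ X) = θ ∘ₗ (br X) ∘ₗ θ := by
  ext W
  have := hθbr X (θ W)
  rw [hθ2] at this
  simp [this.symm]

lemma killing_theta (hθ2 : ∀ X : L, θ (θ X) = X)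
    (hθbr : ∀ X Y, θ (br X Y) = br (θ X) (θ Y)) (X Y : L) :
    killingB br (θ X) (θ Y) = killingB br X Y := by
  have hid : θ ∘ₗ θ = LinearMap.id := LinearMap.ext hθ2
  unfold killingB
  rw [ad_theta br θ hθ2 hθbr X, ad_theta br θ hθ2 hθbr Y]
  have h1 : (θ ∘ₗ br X ∘ₗ θ) ∘ₗ θ ∘ₗ br Y ∘ₗ θ
      = θ ∘ₗ ((br X ∘ₗ br Y) ∘ₗ θ) := by
    ext w; simp [hθ2]
  have h2 : ((br X ∘ₗ br Y) ∘ₗ θ) ∘ₗ θ = br X ∘ₗ br Y := by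
    ext w; simp [hθ2]
  rw [h1, LinearMap.trace_comp_comm' ((br X ∘ₗ br Y) ∘ₗ θ) θ, h2]

/-- Invariance of the Killing form. -/
lemma killing_ad_skew (hjac : ∀ X Y W : L, br X (br Y W) = br (br X Y) W + br Y (br X W))
    (Z X Y : L) : killingB br (br Z X) Y = -killingB br X (br Z Y) := by
  have h1 : ∀ A B : L, br (br A B) = br A ∘ₗ br B - br B ∘ₗ br A := by
    intro A B
    ext W
    have := hjac A B W
    simp only [LinearMap.sub_apply, LinearMap.comp_apply]
    rw [eq_sub_iff_add_eq]
    exact this.symm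
  unfold killingB
  rw [h1, h1]
  have hc : LinearMap.trace ℝ L (br Z ∘ₗ (br X ∘ₗ br Y))
      = LinearMap.trace ℝ L (br X ∘ₗ (br Y ∘ₗ br Z)) := by
    rw [LinearMap.trace_comp_comm' (br X ∘ₗ br Y) (br Z), LinearMap.comp_assoc]
  simp only [LinearMap.sub_comp, LinearMap.comp_sub, map_sub, LinearMap.comp_assoc]
  rw [hc]
  ring

/-- `ad Z` is symmetric for `B_θ` when `θ Z = -Z`. -/
lemma Btheta_adZ_symm (hjac : ∀ X Y W : L, br X (br Y W) = br (br X Y) W + br Y (br X W))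
    (hθbr : ∀ X Y, θ (br X Y) = br (θ X) (θ Y))
    (Z : L) (hZ : θ Z = -Z) (X Y : L) :
    Btheta br θ (br Z X) Y = Btheta br θ X (br Z Y) := by
  have hbr : br Z (θ Y) = -(θ (br Z Y)) := by
    have h := hθbr Z Y
    rw [hZ, map_neg, LinearMap.neg_apply] at h
    rw [h, neg_neg]
  unfold Btheta
  rw [killing_ad_skew br hjac Z X (θ Y), hbr]
  have : killingB br X (-(θ (br Z Y))) = -killingB br X (θ (br Z Y)) := by
    unfold killingB
    simp [map_neg, LinearMap.comp_neg]
  rw [this]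
  ring

/-- Eigenvectors of `ad Z` with distinct eigenvalues are `B_θ`-orthogonal. -/
lemma Btheta_eig_orth (hjac : ∀ X Y W : L, br X (br Y W) = br (br X Y) W + br Y (br X W))
    (hθbr : ∀ X Y, θ (br X Y) = br (θ X) (θ Y))
    (Z : L) (hZ : θ Z = -Z) {x y : L} {l m : ℝ}
    (hx : br Z x = l • x) (hy : br Z y = m • y) (hlm : l ≠ m) :
    Btheta br θ x y = 0 := by
  have h := Btheta_adZ_symm br θ hjac hθbr Z hZ x y
  rw [hx, hy, Btheta_smul_left, Btheta_smul_right] at h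
  have : (l - m) * Btheta br θ x y = 0 := by ring_nf; linarith [h]
  rcases mul_eq_zero.mp this with h' | h'
  · exact absurd (sub_eq_zero.mp h') hlm
  · exact h'

lemma Btheta_nonneg (hpos : ∀ X : L, X ≠ 0 → 0 < Btheta br θ X X) (X : L) :
    0 ≤ Btheta br θ X X := by
  by_cases h : X = 0
  · subst h; rw [Btheta_zero_left]
  · exact (hpos X h).le

lemma Btheta_theta (hθ2 : ∀ X : L, θ (θ X) = X)
    (hθbr : ∀ X Y, θ (br X Y) = br (θ X) (θ Y)) (X Y : L) :
    Btheta br θ (θ X) (θ Y) = Btheta br θ X Y := by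
  unfold Btheta
  rw [killing_theta br θ hθ2 hθbr X (θ Y)]

/-- `exp` applied to an eigenvector. -/
lemma exp_clm_eigen (A : L →L[ℝ] L) (x : L) (c : ℝ) (h : A x = c • x) :
    NormedSpace.exp A x = Real.exp c • x := by
  have hpow : ∀ n : ℕ, (A ^ n) x = c ^ n • x := by
    intro n
    induction n with
    | zero => simp
    | succ n ih =>
      rw [pow_succ, ContinuousLinearMap.mul_apply, h, map_smul, ih, smul_smul, pow_succ,
        mul_comm c (c ^ n)]
  have h1 := (NormedSpace.exp_series_hasSum_exp' (𝕂 := ℝ) A).map (ContinuousLinearMap.apply ℝ L x)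
      (ContinuousLinearMap.apply ℝ L x).continuous
  simp only [Function.comp_def, ContinuousLinearMap.apply_apply,
    ContinuousLinearMap.smul_apply, hpow, smul_smul] at h1
  have h2 : HasSum (fun n : ℕ => (((n.factorial : ℝ))⁻¹ * c ^ n) • x) (Real.exp c • x) := by
    have := (NormedSpace.exp_series_hasSum_exp' (𝕂 := ℝ) c).smul_const x
    simpa [smul_eq_mul, Real.exp_eq_exp_ℝ] using this
  exact h1.unique h2

end Helpers

/-- Let `g = k ⊕ m` be the Cartan decomposition of a real semisimple Lie algebra
(bracket `br`, Cartan involution `θ`), `Z ∈ m`, `Y′ ∈ k`, and write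
`Y′ = Σ_λ Y_λ` with `Y_λ` eigenvectors of `ad Z` for the (real) eigenvalues `λ` ranging
over a finite set `s` closed under negation.  Then `θ(Y_λ) = Y_{−λ}` for each `λ`, and
`B_θ(Ad(exp Z)Y′, Ad(exp Z)Y′) = Σ_λ e^{2λ} B_θ(Y_λ, Y_λ) ≥ B_θ(Y′, Y′)`. -/
theorem btheta_exp_ad_eigen_expansion {L : Type*} [NormedAddCommGroup L]
    [NormedSpace ℝ L] [FiniteDimensional ℝ L]
    (br : L →ₗ[ℝ] L →ₗ[ℝ] L)
    (hskew : ∀ X Y : L, br X Y = -br Y X)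
    (hjac : ∀ X Y Z : L, br X (br Y Z) = br (br X Y) Z + br Y (br X Z))
    (θ : L →ₗ[ℝ] L) (hθ2 : ∀ X, θ (θ X) = X)
    (hθbr : ∀ X Y, θ (br X Y) = br (θ X) (θ Y))
    (hpos : ∀ X : L, X ≠ 0 → 0 < Btheta br θ X X)
    (Z : L) (hZ : θ Z = -Z) (Y' : L) (hY' : θ Y' = Y')
    (s : Finset ℝ) (hs : ∀ l ∈ s, -l ∈ s)
    (Yv : ℝ → L) (hsum : Y' = ∑ l ∈ s, Yv l)
    (heig : ∀ l ∈ s, br Z (Yv l) = l • Yv l)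
    (g : L →ₗ[ℝ] L)
    (hgdef : g =
      ((NormedSpace.exp (LinearMap.toContinuousLinearMap (br Z)) : L →L[ℝ] L) :
        L →ₗ[ℝ] L)) :
    (∀ l ∈ s, θ (Yv l) = Yv (-l)) ∧
    Btheta br θ (g Y') (g Y') = ∑ l ∈ s, Real.exp (2 * l) * Btheta br θ (Yv l) (Yv l) ∧
    Btheta br θ Y' Y' ≤ Btheta br θ (g Y') (g Y') := by
  -- θ anticommutes with ad Z
  have hbrθ : ∀ x : L, br Z (θ x) = -θ (br Z x) := by
    intro x
    have h := hθbr Z x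
    rw [hZ, map_neg, LinearMap.neg_apply] at h
    rw [h, neg_neg]
  have hθeig : ∀ l ∈ s, br Z (θ (Yv l)) = (-l) • θ (Yv l) := by
    intro l hl
    rw [hbrθ, heig l hl, map_smul, ← neg_smul]
  set W : ℝ → L := fun l => θ (Yv (-l)) - Yv l with hWdef
  have hWeig : ∀ l ∈ s, br Z (W l) = l • W l := by
    intro l hl
    have h1 := hθeig (-l) (hs l hl)
    rw [neg_neg] at h1
    simp only [hWdef, map_sub, h1, heig l hl, smul_sub]
  have hsneg : ∑ l ∈ s, Yv (-l) = ∑ l ∈ s, Yv l := by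
    refine Finset.sum_nbij' (fun l => -l) (fun l => -l) (fun a ha => hs a ha)
      (fun a ha => hs a ha) (fun a _ => neg_neg a) (fun a _ => neg_neg a) (fun a _ => rfl)
  have hWsum : ∑ l ∈ s, W l = 0 := by
    simp only [hWdef, Finset.sum_sub_distrib]
    rw [← map_sum, hsneg, ← hsum, hY', sub_self]
  have hW0 : ∀ m ∈ s, W m = 0 := by
    intro m hm
    by_contra hne
    have h0 : Btheta br θ (∑ l ∈ s, W l) (W m) = 0 := by
      rw [hWsum, Btheta_zero_left]
    rw [Btheta_sum_left,
      Finset.sum_eq_single m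
        (fun b hb hbm =>
          Btheta_eig_orth br θ hjac hθbr Z hZ (hWeig b hb) (hWeig m hm) hbm)
        (fun h => absurd hm h)] at h0
    exact absurd h0 (ne_of_gt (hpos _ hne))
  have hθYv : ∀ l ∈ s, θ (Yv l) = Yv (-l) := by
    intro l hl
    have h := hW0 (-l) (hs l hl)
    simp only [hWdef, neg_neg] at h
    exact sub_eq_zero.mp h
  -- action of g on eigenvectors
  have hg : ∀ l ∈ s, g (Yv l) = Real.exp l • Yv l := by
    intro l hl
    rw [hgdef]
    have hA : (LinearMap.toContinuousLinearMap (br Z)) (Yv l) = l • Yv l := by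
      simpa using heig l hl
    simpa using exp_clm_eigen (LinearMap.toContinuousLinearMap (br Z)) (Yv l) l hA
  have hgY' : g Y' = ∑ l ∈ s, Real.exp l • Yv l := by
    rw [hsum, map_sum]
    exact Finset.sum_congr rfl fun l hl => hg l hl
  -- orthogonality of the Yv's
  have horth : ∀ l ∈ s, ∀ m ∈ s, l ≠ m → Btheta br θ (Yv l) (Yv m) = 0 := fun l hl m hm hlm =>
    Btheta_eig_orth br θ hjac hθbr Z hZ (heig l hl) (heig m hm) hlm
  -- general expansion
  have hexpand : ∀ a b : ℝ → ℝ,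
      Btheta br θ (∑ l ∈ s, a l • Yv l) (∑ m ∈ s, b m • Yv m)
        = ∑ l ∈ s, (a l * b l) * Btheta br θ (Yv l) (Yv l) := by
    intro a b
    rw [Btheta_sum_left]
    refine Finset.sum_congr rfl fun l hl => ?_
    rw [Btheta_smul_left, Btheta_sum_right]
    have hinner : ∀ m ∈ s, Btheta br θ (Yv l) (b m • Yv m) = b m * Btheta br θ (Yv l) (Yv m) :=
      fun m _ => Btheta_smul_right br θ _ _ _
    rw [Finset.sum_congr rfl hinner,
      Finset.sum_eq_single l
        (fun m hm hml => by rw [horth l hl m hm (Ne.symm hml), mul_zero])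
        (fun h => absurd hl h)]
    ring
  -- the two Btheta expansions
  have eq2 : Btheta br θ (g Y') (g Y')
      = ∑ l ∈ s, Real.exp (2 * l) * Btheta br θ (Yv l) (Yv l) := by
    rw [hgY', hexpand Real.exp Real.exp]
    refine Finset.sum_congr rfl fun l _ => ?_
    rw [← Real.exp_add, two_mul]
  have eq1 : Btheta br θ Y' Y' = ∑ l ∈ s, Btheta br θ (Yv l) (Yv l) := by
    have h1 : Y' = ∑ l ∈ s, (1 : ℝ) • Yv l := by simpa using hsum
    rw [h1, hexpand (fun _ => (1 : ℝ)) (fun _ => (1 : ℝ))]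
    simp
  -- the inequality
  have hcneg : ∀ l ∈ s, Btheta br θ (Yv (-l)) (Yv (-l)) = Btheta br θ (Yv l) (Yv l) := by
    intro l hl
    rw [← hθYv l hl, Btheta_theta br θ hθ2 hθbr]
  have hre : ∑ l ∈ s, Real.exp (2 * l) * Btheta br θ (Yv l) (Yv l)
      = ∑ l ∈ s, Real.exp (-(2 * l)) * Btheta br θ (Yv l) (Yv l) := by
    refine Finset.sum_nbij' (fun l => -l) (fun l => -l) (fun a ha => hs a ha)
      (fun a ha => hs a ha) (fun a _ => neg_neg a) (fun a _ => neg_neg a) (fun a ha => ?_)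
    rw [hcneg a ha]
    ring_nf
  have hkey : ∑ l ∈ s, 2 * Btheta br θ (Yv l) (Yv l)
      ≤ ∑ l ∈ s, (Real.exp (2 * l) * Btheta br θ (Yv l) (Yv l)
        + Real.exp (-(2 * l)) * Btheta br θ (Yv l) (Yv l)) := by
    refine Finset.sum_le_sum fun l _ => ?_
    have h2 : (2 : ℝ) ≤ Real.exp (2 * l) + Real.exp (-(2 * l)) := by
      have ha := Real.add_one_le_exp (2 * l)
      have hb := Real.add_one_le_exp (-(2 * l))
      linarith
    have hc0 : 0 ≤ Btheta br θ (Yv l) (Yv l) := Btheta_nonneg br θ hpos (Yv l)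
    nlinarith
  rw [Finset.sum_add_distrib, ← hre, ← Finset.mul_sum] at hkey
  refine ⟨hθYv, eq2, ?_⟩
  rw [eq1, eq2]
  linarith
end

section
/- Let g be a real semisimple Lie algebra with commuting involutions σ and θ (θ a Cartan involution), τ = σθ, and let t be a maximal abelian subspace of k ∩ q. For a = exp Y with Y ∈ t, define f_a = τ ∘ Ad(a) ∘ σ ∘ Ad(a)^{−1} on the complexification g_C. Then the fixed space of f_a is g_C^{f_a} = z_{k_C}(t) ⊕ ⊕_{α: e^{−2α(Y)}=1} k_C(t,α) ⊕ ⊕_{α: e^{−2α(Y)}=−1} m_C(t,α). -/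
/-- The subspace of `g_C` of weight `α` for `t` on which `θ` acts by the scalar `sgn`:
for `sgn = 1` this is `k_C(t,α)`, for `sgn = −1` it is `m_C(t,α)`, and for `α = 0`,
`sgn = 1` it is the centralizer `z_{k_C}(t)`. -/
def weightTheta {gC : Type*} [LieRing gC] [LieAlgebra ℂ gC]
    (θ : gC →ₗ⁅ℂ⁆ gC) (t : Set gC) (α : gC → ℂ) (sgn : ℂ) : Submodule ℂ gC where
  carrier := {X | (∀ Y ∈ t, ⁅Y, X⁆ = α Y • X) ∧ θ X = sgn • X}
  add_mem' := by
    rintro a b ⟨ha1, ha2⟩ ⟨hb1, hb2⟩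
    exact ⟨fun Y hY => by rw [lie_add, ha1 Y hY, hb1 Y hY, smul_add],
      by rw [map_add, ha2, hb2, smul_add]⟩
  zero_mem' := ⟨fun Y hY => by simp, by simp⟩
  smul_mem' := by
    rintro c x ⟨h1, h2⟩
    exact ⟨fun Y hY => by rw [lie_smul, h1 Y hY, smul_comm],
      by rw [map_smul, h2, smul_comm]⟩

/-- Let `f_a = τ ∘ Ad(a) ∘ σ ∘ Ad(a)⁻¹` with `a = exp Y₀`, `Y₀ ∈ t`, acting on the
complexification `g_C = z_{k_C}(t) ⊕ ⊕_α (k_C(t,α) ⊕ m_C(t,α))`.  Then the fixed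
space of `f_a` is
`g_C^{f_a} = z_{k_C}(t) ⊕ ⊕_{α : e^{−2α(Y₀)} = 1} k_C(t,α) ⊕ ⊕_{α : e^{−2α(Y₀)} = −1} m_C(t,α)`. -/
theorem fixed_space_of_f_a {gC : Type*} [LieRing gC] [LieAlgebra ℂ gC]
    (σ θ : gC →ₗ⁅ℂ⁆ gC)
    (hσσ : ∀ X, σ (σ X) = X) (hθθ : ∀ X, θ (θ X) = X)
    (hcomm : ∀ X, σ (θ X) = θ (σ X))
    (t : Set gC) (Y₀ : gC) (hY₀ : Y₀ ∈ t)
    (hσt : ∀ Y ∈ t, σ Y = -Y) (hθt : ∀ Y ∈ t, θ Y = Y)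
    (Ada AdaInv : gC →ₗ⁅ℂ⁆ gC)
    (hAda : ∀ (c : ℂ) (W : gC), ⁅Y₀, W⁆ = c • W → Ada W = Complex.exp c • W)
    (hAdaInv : ∀ (c : ℂ) (W : gC), ⁅Y₀, W⁆ = c • W → AdaInv W = Complex.exp (-c) • W)
    {ι : Type*} [Fintype ι] (αf : ι → gC → ℂ)
    (hindep : iSupIndep (fun o : Option (ι × Bool) =>
      o.elim (weightTheta θ t (fun _ => 0) 1) (fun p =>
        if p.2 then weightTheta θ t (αf p.1) 1 else weightTheta θ t (αf p.1) (-1))))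
    (hspan : (⨆ o : Option (ι × Bool),
      o.elim (weightTheta θ t (fun _ => 0) 1) (fun p =>
        if p.2 then weightTheta θ t (αf p.1) 1 else weightTheta θ t (αf p.1) (-1))) = ⊤) :
    {X : gC | σ (θ (Ada (σ (AdaInv X)))) = X} =
      ↑(weightTheta θ t (fun _ => 0) 1 ⊔
        (⨆ i : ι, ⨆ _ : Complex.exp (-(2 * αf i Y₀)) = 1, weightTheta θ t (αf i) 1) ⊔
        (⨆ i : ι, ⨆ _ : Complex.exp (-(2 * αf i Y₀)) = -1,
          weightTheta θ t (αf i) (-1))) := by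
  classical
  set V : Option (ι × Bool) → Submodule ℂ gC := fun o =>
    o.elim (weightTheta θ t (fun _ => 0) 1) (fun p =>
      if p.2 then weightTheta θ t (αf p.1) 1 else weightTheta θ t (αf p.1) (-1)) with hV
  set lam : Option (ι × Bool) → ℂ := fun o =>
    o.elim 1 (fun p => if p.2 then Complex.exp (-(2 * αf p.1 Y₀))
      else -Complex.exp (-(2 * αf p.1 Y₀))) with hlam
  set Flin : gC →ₗ[ℂ] gC := σ.toLinearMap ∘ₗ θ.toLinearMap ∘ₗ Ada.toLinearMap ∘ₗ
    σ.toLinearMap ∘ₗ AdaInv.toLinearMap with hFdef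
  have hFapp : ∀ Z, Flin Z = σ (θ (Ada (σ (AdaInv Z)))) := fun Z => rfl
  -- the key eigenvalue computation
  have key : ∀ (α : gC → ℂ) (sgn : ℂ), ∀ X ∈ weightTheta θ t α sgn,
      σ (θ (Ada (σ (AdaInv X)))) = (sgn * Complex.exp (-(2 * α Y₀))) • X := by
    rintro α sgn X ⟨h1, h2⟩
    have hc : ⁅Y₀, X⁆ = α Y₀ • X := h1 Y₀ hY₀
    have hσX : ⁅Y₀, σ X⁆ = (-(α Y₀)) • σ X := by
      have h3 : σ ⁅Y₀, σ X⁆ = (-(α Y₀)) • X := by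
        rw [LieHom.map_lie, hσt Y₀ hY₀, hσσ, neg_lie, hc, neg_smul]
      calc ⁅Y₀, σ X⁆ = σ (σ ⁅Y₀, σ X⁆) := (hσσ _).symm
        _ = σ ((-(α Y₀)) • X) := by rw [h3]
        _ = (-(α Y₀)) • σ X := by rw [map_smul]
    have hθσ : θ (σ X) = sgn • σ X := by rw [← hcomm, h2, map_smul]
    rw [hAdaInv (α Y₀) X hc, map_smul σ, map_smul Ada, hAda (-(α Y₀)) (σ X) hσX,
      map_smul θ, map_smul θ, hθσ, map_smul σ, map_smul σ, map_smul σ, hσσ,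
      smul_smul, smul_smul]
    congr 1
    rw [← Complex.exp_add]
    rw [show -α Y₀ + -α Y₀ = -(2 * α Y₀) by ring]
    ring
  have keyV : ∀ o : Option (ι × Bool), ∀ X ∈ V o,
      σ (θ (Ada (σ (AdaInv X)))) = lam o • X := by
    rintro (_ | ⟨i, b⟩) X hX
    · have := key (fun _ => 0) 1 X hX
      simpa [hlam] using this
    · cases b
      · have := key (αf i) (-1) X (by simpa [hV] using hX)
        simpa [hlam] using this
      · have := key (αf i) 1 X (by simpa [hV] using hX)
        simpa [hlam] using this
  ext X
  simp only [Set.mem_setOf_eq, SetLike.mem_coe]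
  constructor
  · -- fixed vector lies in the claimed submodule
    intro hXfix
    have hXtop : X ∈ ⨆ o, V o := hspan ▸ Submodule.mem_top
    obtain ⟨f, hf⟩ := (Submodule.mem_iSup_iff_exists_dfinsupp V X).mp hXtop
    set g : Π₀ o, V o := DFinsupp.mapRange (fun o (x : V o) => lam o • x)
      (fun o => smul_zero _) f with hg
    have hsum : ∀ (h : Π₀ o, V o),
        DFinsupp.lsum ℕ (M := fun o => ↥(V o)) (fun o => (V o).subtype) h
          = h.sum fun _ xi => (xi : gC) := by
      intro h
      simp [DFinsupp.lsum_apply_apply, DFinsupp.sumAddHom_apply]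
    have hfsum : (f.sum fun _ xi => (xi : gC)) = X := by rw [← hsum]; exact hf
    have hgf : g = f := by
      apply (iSupIndep_iff_dfinsupp_lsum_injective V).mp hindep
      rw [hsum g, hsum f, hfsum, hg,
        DFinsupp.sum_mapRange_index (fun o => by simp)]
      have h1 : (f.sum fun o (xi : V o) => ((lam o • xi : V o) : gC))
          = f.sum fun o (xi : V o) => Flin (xi : gC) := by
        simp only [DFinsupp.sum]
        refine Finset.sum_congr rfl fun o _ => ?_
        rw [Submodule.coe_smul]
        exact (keyV o _ (f o).2).symm
      have h2 : (f.sum fun o (xi : V o) => Flin (xi : gC)) = Flin X :=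
        (map_sum Flin (fun o => ((f o : gC))) f.support).symm.trans
          (congrArg Flin hfsum)
      exact h1.trans (h2.trans hXfix)
    have heig : ∀ o, lam o • ((f o : gC)) = (f o : gC) := by
      intro o
      calc lam o • ((f o : gC)) = ((lam o • f o : V o) : gC) := rfl
        _ = ((g o : V o) : gC) := by rw [hg, DFinsupp.mapRange_apply]
        _ = ((f o : gC)) := by rw [hgf]
    rw [← hfsum]
    refine Submodule.sum_mem _ fun o _ => ?_
    show ((f o : gC)) ∈ _
    rcases eq_or_ne ((f o : gC)) 0 with h0 | h0
    · rw [h0]; exact Submodule.zero_mem _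
    have hlam1 : lam o = 1 := by
      have h := heig o
      have hz : (lam o - 1) • ((f o : gC)) = 0 := by
        rw [sub_smul, one_smul, h, sub_self]
      rcases smul_eq_zero.mp hz with h' | h'
      · exact sub_eq_zero.mp h'
      · exact absurd h' h0
    match o with
    | none =>
      exact Submodule.mem_sup_left (Submodule.mem_sup_left (f none).2)
    | some (i, true) =>
      have h1 : Complex.exp (-(2 * αf i Y₀)) = 1 := by simpa [hlam] using hlam1
      refine Submodule.mem_sup_left (Submodule.mem_sup_right ?_)
      exact Submodule.mem_iSup_of_mem i (Submodule.mem_iSup_of_mem h1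
        (by simpa [hV] using (f (some (i, true))).2))
    | some (i, false) =>
      have h1 : Complex.exp (-(2 * αf i Y₀)) = -1 := by
        have h2 : -Complex.exp (-(2 * αf i Y₀)) = 1 := by simpa [hlam] using hlam1
        linear_combination -h2
      refine Submodule.mem_sup_right ?_
      exact Submodule.mem_iSup_of_mem i (Submodule.mem_iSup_of_mem h1
        (by simpa [hV] using (f (some (i, false))).2))
  · -- every vector of the claimed submodule is fixed
    intro hX
    set P : Submodule ℂ gC := LinearMap.ker (Flin - LinearMap.id) with hP
    have hPmem : ∀ Z, Z ∈ P ↔ σ (θ (Ada (σ (AdaInv Z)))) = Z := by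
      intro Z
      rw [hP, LinearMap.mem_ker, LinearMap.sub_apply, LinearMap.id_apply,
        sub_eq_zero, hFapp]
    have hle : weightTheta θ t (fun _ => 0) 1 ⊔
        (⨆ i : ι, ⨆ _ : Complex.exp (-(2 * αf i Y₀)) = 1, weightTheta θ t (αf i) 1) ⊔
        (⨆ i : ι, ⨆ _ : Complex.exp (-(2 * αf i Y₀)) = -1,
          weightTheta θ t (αf i) (-1)) ≤ P := by
      refine sup_le (sup_le ?_ ?_) ?_
      · intro Z hZ
        rw [hPmem]
        have := key (fun _ => 0) 1 Z hZ
        simpa using this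
      · refine iSup_le fun i => iSup_le fun h1 => fun Z hZ => ?_
        rw [hPmem]
        have := key (αf i) 1 Z hZ
        rw [this, h1, one_mul, one_smul]
      · refine iSup_le fun i => iSup_le fun h1 => fun Z hZ => ?_
        rw [hPmem]
        have := key (αf i) (-1) Z hZ
        rw [this, h1]
        norm_num
    exact (hPmem X).mp (hle hX)
end
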